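/- Let T be a skew-adjoint endomorphism of V with T(W) ⊆ W^⊥ and T(W^⊥) ⊆ W. Then for every X ∈ W, ⟨S_T, X⟩ = tr(T∘S_X). -/

import Mathlib

open scoped RealInnerProductSpace

/-- The endomorphism `S_X` of `V` associated to a second fundamental form `Π` and its
Weingarten operator `A`: `S_X(Z) = Π(X, P_W Z) - A_{P_{W^⊥} Z}(X)`. -/
noncomputable def Sop {V : Type*} [NormedAddCommGroup V] [InnerProductSpace ℝ V]
    [FiniteDimensional ℝ V] (W : Submodule ℝ V)
    (Pi : W →ₗ[ℝ] W →ₗ[ℝ] ↥Wᗮ) (A : ↥Wᗮ →ₗ[ℝ] W →ₗ[ℝ] W) (X : W) : V →ₗ[ℝ] V :=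
  Wᗮ.subtype ∘ₗ (Pi X) ∘ₗ (Submodule.orthogonalProjection W).toLinearMap
    - W.subtype ∘ₗ (A.flip X) ∘ₗ (Submodule.orthogonalProjection Wᗮ).toLinearMap

/-- The vector `S_T = ∑_A S_{e_A}(T e_A) - ∑_α S_{T e_α}(e_α)` associated to an
endomorphism `T` interchanging `W` and `Wᗮ` (for such `T`, `T e_α ∈ W`, realized here
via the orthogonal projection onto `W`). -/
noncomputable def STvec {V : Type*} [NormedAddCommGroup V] [InnerProductSpace ℝ V]
    [FiniteDimensional ℝ V] (W : Submodule ℝ V)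
    (Pi : W →ₗ[ℝ] W →ₗ[ℝ] ↥Wᗮ) (A : ↥Wᗮ →ₗ[ℝ] W →ₗ[ℝ] W)
    {ι κ : Type*} [Fintype ι] [Fintype κ]
    (eW : OrthonormalBasis ι ℝ ↥W) (eP : OrthonormalBasis κ ℝ ↥Wᗮ)
    (T : V →ₗ[ℝ] V) : V :=
  ∑ i, Sop W Pi A (eW i) (T ((eW i : V)))
    - ∑ j, Sop W Pi A (Submodule.orthogonalProjection W (T ((eP j : V)))) ((eP j : V))

/-- Trace of an endomorphism of a real inner product space via an orthonormal basis. -/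
theorem trace_onb {E : Type*} [NormedAddCommGroup E] [InnerProductSpace ℝ E]
    [FiniteDimensional ℝ E] {ι : Type*} [Fintype ι]
    (b : OrthonormalBasis ι ℝ E) (f : E →ₗ[ℝ] E) :
    LinearMap.trace ℝ E f = ∑ i, ⟪b i, f (b i)⟫ := by
  classical
  rw [LinearMap.trace_eq_matrix_trace ℝ b.toBasis f, Matrix.trace]
  congr 1
  ext i
  rw [Matrix.diag_apply, LinearMap.toMatrix_apply, OrthonormalBasis.coe_toBasis,
    OrthonormalBasis.coe_toBasis_repr_apply, OrthonormalBasis.repr_apply_apply]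

/-- For a skew-adjoint `T` with `T(W) ⊆ Wᗮ` and `T(Wᗮ) ⊆ W`, one has
`⟨S_T, X⟩ = tr (T ∘ S_X)` for every `X ∈ W`. -/
theorem stmt_6 {V : Type*} [NormedAddCommGroup V] [InnerProductSpace ℝ V]
    [FiniteDimensional ℝ V] (W : Submodule ℝ V)
    (Pi : W →ₗ[ℝ] W →ₗ[ℝ] ↥Wᗮ) (A : ↥Wᗮ →ₗ[ℝ] W →ₗ[ℝ] W)
    (hsymm : ∀ X Y : W, Pi X Y = Pi Y X)
    (hWein : ∀ (ξ : ↥Wᗮ) (X Y : W), ⟪((A ξ X : W) : V), (Y : V)⟫ = ⟪((Pi X Y : ↥Wᗮ) : V), (ξ : V)⟫)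
    (T : V →ₗ[ℝ] V) (hT : ∀ z z' : V, ⟪T z, z'⟫ = -⟪z, T z'⟫)
    (hTW : ∀ z ∈ W, T z ∈ Wᗮ) (hTP : ∀ z ∈ Wᗮ, T z ∈ W)
    {ι κ : Type*} [Fintype ι] [Fintype κ]
    (eW : OrthonormalBasis ι ℝ ↥W) (eP : OrthonormalBasis κ ℝ ↥Wᗮ)
    (X : W) :
    ⟪STvec W Pi A eW eP T, (X : V)⟫ = LinearMap.trace ℝ V (T ∘ₗ Sop W Pi A X) := by
  classical
  have hSop : ∀ (Y : W) (Z : V), Sop W Pi A Y Z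
      = ((Pi Y (Submodule.orthogonalProjection W Z) : ↥Wᗮ) : V)
        - ((A (Submodule.orthogonalProjection Wᗮ Z) Y : W) : V) := fun Y Z => rfl
  have hL : ⟪STvec W Pi A eW eP T, (X : V)⟫
      = (∑ i, ⟪Sop W Pi A (eW i) (T ((eW i : V))), (X : V)⟫)
        - ∑ j, ⟪Sop W Pi A (Submodule.orthogonalProjection W (T ((eP j : V)))) ((eP j : V)), (X : V)⟫ := by
    rw [STvec, inner_sub_left, sum_inner, sum_inner]
  have hR : LinearMap.trace ℝ V (T ∘ₗ Sop W Pi A X)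
      = (∑ i, ⟪((eW i : ↥W) : V), T ((Pi X (eW i) : ↥Wᗮ) : V)⟫)
        - ∑ j, ⟪((eP j : ↥Wᗮ) : V), T ((A (eP j) X : W) : V)⟫ := by
    have hsplit : T ∘ₗ Sop W Pi A X
        = ((T ∘ₗ Wᗮ.subtype ∘ₗ (Pi X)) ∘ₗ (Submodule.orthogonalProjection W).toLinearMap)
          - ((T ∘ₗ W.subtype ∘ₗ (A.flip X)) ∘ₗ (Submodule.orthogonalProjection Wᗮ).toLinearMap) := by
      ext z
      simp [Sop, map_sub]
    rw [hsplit, map_sub,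
      LinearMap.trace_comp_comm' (Submodule.orthogonalProjection W).toLinearMap
        (T ∘ₗ Wᗮ.subtype ∘ₗ (Pi X)),
      LinearMap.trace_comp_comm' (Submodule.orthogonalProjection Wᗮ).toLinearMap
        (T ∘ₗ W.subtype ∘ₗ (A.flip X)),
      trace_onb eW, trace_onb eP]
    congr 1
    · refine Finset.sum_congr rfl fun i _ => ?_
      simp [Submodule.coe_inner]
    · refine Finset.sum_congr rfl fun j _ => ?_
      simp [Submodule.coe_inner]
  rw [hL, hR]
  congr 1
  · refine Finset.sum_congr rfl fun i _ => ?_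
    have hz : T ((eW i : ↥W) : V) ∈ Wᗮ := hTW _ (eW i).2
    have h0 : Submodule.orthogonalProjection W (T ((eW i : ↥W) : V)) = 0 :=
      Submodule.orthogonalProjectionOnto_apply_of_mem_orthogonal hz
    have h1 : Submodule.orthogonalProjection Wᗮ (T ((eW i : ↥W) : V)) = ⟨T ((eW i : ↥W) : V), hz⟩ :=
      Subtype.ext (Submodule.starProjection_eq_self_iff.mpr hz)
    have e2 : ⟪((eW i : ↥W) : V), T ((Pi X (eW i) : ↥Wᗮ) : V)⟫
        = -⟪((Pi X (eW i) : ↥Wᗮ) : V), T ((eW i : ↥W) : V)⟫ := by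
      rw [real_inner_comm, hT]
    rw [hSop, h0, h1, map_zero, Submodule.coe_zero, zero_sub, inner_neg_left,
      hWein, hsymm, e2]
  · refine Finset.sum_congr rfl fun j _ => ?_
    have hw : T ((eP j : ↥Wᗮ) : V) ∈ W := hTP _ (eP j).2
    have h0 : Submodule.orthogonalProjection W ((eP j : ↥Wᗮ) : V) = 0 :=
      Submodule.orthogonalProjectionOnto_apply_of_mem_orthogonal (eP j).2
    have h1 : Submodule.orthogonalProjection Wᗮ ((eP j : ↥Wᗮ) : V) = eP j :=
      Submodule.orthogonalProjectionOnto_mem_subspace_eq_self (eP j)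
    have h2 : Submodule.orthogonalProjection W (T ((eP j : ↥Wᗮ) : V)) = ⟨T ((eP j : ↥Wᗮ) : V), hw⟩ :=
      Subtype.ext (Submodule.starProjection_eq_self_iff.mpr hw)
    have e2 : ⟪((eP j : ↥Wᗮ) : V), T ((A (eP j) X : W) : V)⟫
        = -⟪((A (eP j) X : W) : V), T ((eP j : ↥Wᗮ) : V)⟫ := by
      rw [real_inner_comm, hT]
    have e3 : ⟪((A (eP j) X : W) : V), T ((eP j : ↥Wᗮ) : V)⟫
        = ⟪((Pi X ⟨T ((eP j : ↥Wᗮ) : V), hw⟩ : ↥Wᗮ) : V), ((eP j : ↥Wᗮ) : V)⟫ :=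
      hWein (eP j) X ⟨T ((eP j : ↥Wᗮ) : V), hw⟩
    rw [hSop, h0, h1, h2, map_zero, Submodule.coe_zero, zero_sub, inner_neg_left,
      hWein, hsymm, e2, e3]
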